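/- For any two probability measures P, Q on the same measurable space and any binary test (measurable event) A, the average error satisfies P(Aᶜ) + Q(A) ≥ (1/2)·exp(−KL(P ‖ Q)) (Bretagnolle–Huber inequality); consequently, if KL(P‖Q) ≤ 2ρε²n/(m−ε)², any test distinguishing P from Q errs with probability at least (1/4)·exp(−2ρε²n/(m−ε)²) under the mixture (P+Q)/2. -/

import Mathlib

open MeasureTheory

noncomputable def klDiv {α : Type*} [MeasurableSpace α] (μ ν : Measure α) : ℝ :=
  ∫ x, Real.log ((μ.rnDeriv ν x).toReal) ∂μ


section Aux
variable {α : Type*} [MeasurableSpace α]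
  (P Q : Measure α) [IsProbabilityMeasure P] [IsProbabilityMeasure Q]

/-- Cauchy–Schwarz step: `∫⁻_s √(dP/dQ) ∂Q ≤ (P s)^½ (Q s)^½`. -/
lemma cs_step (hac : P ≪ Q) (s : Set α) (hs : MeasurableSet s) :
    ∫⁻ x in s, (P.rnDeriv Q x) ^ (2⁻¹ : ℝ) ∂Q ≤ (P s) ^ (2⁻¹ : ℝ) * (Q s) ^ (2⁻¹ : ℝ) := by
  have hconj : (2 : ℝ).HolderConjugate 2 := Real.HolderConjugate.two_two
  have hmeas : AEMeasurable (fun x => (P.rnDeriv Q x) ^ (2⁻¹ : ℝ)) (Q.restrict s) :=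
    ((Measure.measurable_rnDeriv P Q).pow_const _).aemeasurable
  have h := ENNReal.lintegral_mul_le_Lp_mul_Lq (Q.restrict s) hconj hmeas
    (aemeasurable_const (b := (1 : ENNReal)))
  simp only [Pi.mul_apply, mul_one, ENNReal.one_rpow, lintegral_const,
    Measure.restrict_apply MeasurableSet.univ, Set.univ_inter] at h
  have heq : ∀ x, ((P.rnDeriv Q x) ^ (2⁻¹ : ℝ)) ^ (2 : ℝ) = P.rnDeriv Q x := by
    intro x
    rw [← ENNReal.rpow_mul]
    norm_num
  simp only [heq] at h
  rw [Measure.setLIntegral_rnDeriv hac s] at h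
  calc ∫⁻ x in s, (P.rnDeriv Q x) ^ (2⁻¹ : ℝ) ∂Q
      ≤ (P s) ^ (1/2 : ℝ) * ((1 : ENNReal) * Q s) ^ (1/2 : ℝ) := h
    _ = (P s) ^ (2⁻¹ : ℝ) * (Q s) ^ (2⁻¹ : ℝ) := by norm_num

end Aux

section Main
variable {α : Type*} [MeasurableSpace α]

lemma bh_main (P Q : Measure α) [IsProbabilityMeasure P] [IsProbabilityMeasure Q]
    (hac : P ≪ Q)
    (hint : Integrable (fun x => Real.log ((P.rnDeriv Q x).toReal)) P)
    (A : Set α) (hA : MeasurableSet A) :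
    (1 / 2) * Real.exp (-(klDiv P Q)) ≤ (P Aᶜ).toReal + (Q A).toReal := by
  set f := P.rnDeriv Q with hf
  have hfmeas : Measurable f := Measure.measurable_rnDeriv P Q
  set S : ENNReal := ∫⁻ x, f x ^ (2⁻¹ : ℝ) ∂Q with hS
  have hS_le : S ≤ 1 := by
    have h := cs_step P Q hac Set.univ MeasurableSet.univ
    simp only [Measure.restrict_univ, measure_univ, ENNReal.one_rpow, mul_one] at h
    simpa [hS] using h
  have hS_ne_top : S ≠ ⊤ := (hS_le.trans_lt ENNReal.one_lt_top).ne
  have hS_pos : 0 < S := by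
    rw [pos_iff_ne_zero]
    intro h0
    have hzero : ∀ᵐ x ∂Q, f x ^ (2⁻¹ : ℝ) = 0 :=
      (lintegral_eq_zero_iff (hfmeas.pow_const _)).mp h0
    have hfzero : ∀ᵐ x ∂Q, f x = 0 := by
      filter_upwards [hzero] with x hx
      rcases ENNReal.rpow_eq_zero_iff.mp hx with ⟨h0', _⟩ | ⟨_, hneg⟩
      · exact h0'
      · norm_num at hneg
    have h1 : ∫⁻ x, f x ∂Q = 0 := (lintegral_eq_zero_iff hfmeas).mpr hfzero
    rw [Measure.lintegral_rnDeriv hac] at h1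
    simp [measure_univ] at h1
  set B := S.toReal with hB
  have hB_pos : 0 < B := ENNReal.toReal_pos hS_pos.ne' hS_ne_top
  set h : α → ℝ := fun x => (f x).toReal ^ (-(2⁻¹) : ℝ) with hh
  have hh_nonneg : ∀ x, 0 ≤ h x := fun x => Real.rpow_nonneg ENNReal.toReal_nonneg _
  have hh_meas : Measurable h := hfmeas.ennreal_toReal.pow_const _
  have hf_pos : ∀ᵐ x ∂P, 0 < f x := Measure.rnDeriv_pos hac
  have hf_lt_top : ∀ᵐ x ∂P, f x < ⊤ := hac.ae_le (Measure.rnDeriv_lt_top P Q)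
  have hkey : ∫⁻ x, ENNReal.ofReal (h x) ∂P = S := by
    conv_lhs => rw [← Measure.withDensity_rnDeriv_eq P Q hac]
    rw [lintegral_withDensity_eq_lintegral_mul Q hfmeas
      (g := fun x => ENNReal.ofReal (h x)) hh_meas.ennreal_ofReal]
    refine lintegral_congr_ae ?_
    filter_upwards [Measure.rnDeriv_lt_top P Q] with x hx
    simp only [Pi.mul_apply]
    rcases eq_or_ne (f x) 0 with h0 | h0
    · simp [hh, h0, Real.zero_rpow, ENNReal.zero_rpow_of_pos, show (0:ℝ) < 2⁻¹ by norm_num]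
    · have ht_pos : 0 < (f x).toReal := ENNReal.toReal_pos h0 hx.ne
      rw [hh]
      rw [← ENNReal.ofReal_rpow_of_pos ht_pos, ENNReal.ofReal_toReal hx.ne]
      nth_rewrite 1 [← ENNReal.rpow_one (f x)]
      rw [← ENNReal.rpow_add _ _ h0 hx.ne]
      norm_num
  have hh_int : Integrable h P := by
    refine ⟨hh_meas.aestronglyMeasurable, ?_⟩
    rw [hasFiniteIntegral_iff_ofReal (Filter.Eventually.of_forall hh_nonneg), hkey]
    exact hS_ne_top.lt_top
  have hh_eq : ∫ x, h x ∂P = B := by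
    rw [integral_eq_lintegral_of_nonneg_ae (Filter.Eventually.of_forall hh_nonneg)
      hh_meas.aestronglyMeasurable, hkey]
  have hlog_eq : ∀ᵐ x ∂P, Real.log (h x) = -(2⁻¹) * Real.log ((f x).toReal) := by
    filter_upwards [hf_pos, hf_lt_top] with x hx hx'
    exact Real.log_rpow (ENNReal.toReal_pos hx.ne' hx'.ne) _
  have hlogh_int : Integrable (fun x => Real.log (h x)) P := by
    refine (hint.const_mul (-(2⁻¹))).congr ?_
    filter_upwards [hlog_eq] with x hx using hx.symm
  have hjensen : ∫ x, Real.log (h x) ∂P ≤ Real.log B := by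
    have hptwise : ∀ᵐ x ∂P, Real.log (h x) ≤ Real.log B + h x / B - 1 := by
      filter_upwards [hf_pos, hf_lt_top] with x hx hx'
      have hhx_pos : 0 < h x := Real.rpow_pos_of_pos (ENNReal.toReal_pos hx.ne' hx'.ne) _
      have hlog := Real.log_le_sub_one_of_pos (div_pos hhx_pos hB_pos)
      rw [Real.log_div hhx_pos.ne' hB_pos.ne'] at hlog
      linarith
    have hint2 : Integrable (fun x => h x / B) P := hh_int.div_const B
    have hint1 : Integrable (fun x => Real.log B + h x / B) P := (integrable_const (Real.log B)).add hint2
    have hrhs_int : Integrable (fun x => Real.log B + h x / B - 1) P :=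
      hint1.sub (integrable_const 1)
    have hmono := integral_mono_ae hlogh_int hrhs_int hptwise
    have hrhs_eq : ∫ x, (Real.log B + h x / B - 1) ∂P = Real.log B := by
      rw [integral_sub hint1 (integrable_const 1),
        integral_add (integrable_const _) hint2, integral_div, hh_eq,
        integral_const, integral_const]
      simp [hB_pos.ne']
    rw [hrhs_eq] at hmono
    exact hmono
  have hexp : Real.exp (-(klDiv P Q)) ≤ B ^ 2 := by
    have hint_eq : ∫ x, Real.log (h x) ∂P = -(2⁻¹) * klDiv P Q := by
      rw [klDiv, ← integral_const_mul]
      exact integral_congr_ae hlog_eq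
    have h1 : -(2⁻¹) * klDiv P Q ≤ Real.log B := hint_eq ▸ hjensen
    have h2 : -(klDiv P Q) ≤ 2 * Real.log B := by linarith
    calc Real.exp (-(klDiv P Q)) ≤ Real.exp (2 * Real.log B) := Real.exp_le_exp.mpr h2
      _ = B ^ 2 := by
          rw [mul_comm, Real.exp_mul, Real.exp_log hB_pos, Real.rpow_two]
  have hrpow_le_one : ∀ s : Set α, (P s) ^ (2⁻¹ : ℝ) ≤ 1 := fun s => by
    calc (P s) ^ (2⁻¹ : ℝ) ≤ (1 : ENNReal) ^ (2⁻¹ : ℝ) :=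
        ENNReal.rpow_le_rpow prob_le_one (by norm_num)
      _ = 1 := ENNReal.one_rpow _
  have hrpow_le_one' : ∀ s : Set α, (Q s) ^ (2⁻¹ : ℝ) ≤ 1 := fun s => by
    calc (Q s) ^ (2⁻¹ : ℝ) ≤ (1 : ENNReal) ^ (2⁻¹ : ℝ) :=
        ENNReal.rpow_le_rpow prob_le_one (by norm_num)
      _ = 1 := ENNReal.one_rpow _
  have hsplit : S ≤ (Q A) ^ (2⁻¹ : ℝ) + (P Aᶜ) ^ (2⁻¹ : ℝ) := by
    rw [hS, ← lintegral_add_compl (fun x => f x ^ (2⁻¹ : ℝ)) hA]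
    refine add_le_add ?_ ?_
    · calc ∫⁻ x in A, f x ^ (2⁻¹ : ℝ) ∂Q ≤ (P A) ^ (2⁻¹ : ℝ) * (Q A) ^ (2⁻¹ : ℝ) :=
          cs_step P Q hac A hA
        _ ≤ 1 * (Q A) ^ (2⁻¹ : ℝ) := mul_le_mul' (hrpow_le_one A) le_rfl
        _ = (Q A) ^ (2⁻¹ : ℝ) := one_mul _
    · calc ∫⁻ x in Aᶜ, f x ^ (2⁻¹ : ℝ) ∂Q ≤ (P Aᶜ) ^ (2⁻¹ : ℝ) * (Q Aᶜ) ^ (2⁻¹ : ℝ) :=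
          cs_step P Q hac Aᶜ hA.compl
        _ ≤ (P Aᶜ) ^ (2⁻¹ : ℝ) * 1 := mul_le_mul' le_rfl (hrpow_le_one' Aᶜ)
        _ = (P Aᶜ) ^ (2⁻¹ : ℝ) := mul_one _
  set a := ((Q A).toReal) with ha
  set b := ((P Aᶜ).toReal) with hb
  have hB_le : B ≤ Real.sqrt a + Real.sqrt b := by
    have hfin1 : ((Q A) ^ (2⁻¹ : ℝ)) ≠ ⊤ :=
      (ENNReal.rpow_lt_top_of_nonneg (by norm_num) (measure_ne_top _ _)).ne
    have hfin2 : ((P Aᶜ) ^ (2⁻¹ : ℝ)) ≠ ⊤ :=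
      (ENNReal.rpow_lt_top_of_nonneg (by norm_num) (measure_ne_top _ _)).ne
    have hmono := ENNReal.toReal_mono (ENNReal.add_ne_top.mpr ⟨hfin1, hfin2⟩) hsplit
    rw [ENNReal.toReal_add hfin1 hfin2, ← ENNReal.toReal_rpow, ← ENNReal.toReal_rpow] at hmono
    rw [Real.sqrt_eq_rpow, Real.sqrt_eq_rpow]
    norm_num at hmono ⊢
    exact hmono
  have ha_nonneg : 0 ≤ a := ENNReal.toReal_nonneg
  have hb_nonneg : 0 ≤ b := ENNReal.toReal_nonneg
  have hsa : Real.sqrt a ^ 2 = a := Real.sq_sqrt ha_nonneg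
  have hsb : Real.sqrt b ^ 2 = b := Real.sq_sqrt hb_nonneg
  have hB2 : B ^ 2 ≤ 2 * (a + b) := by
    nlinarith [Real.sqrt_nonneg a, Real.sqrt_nonneg b, hB_pos,
      sq_nonneg (Real.sqrt a - Real.sqrt b)]
  have := hexp
  nlinarith [Real.exp_pos (-(klDiv P Q))]

end Main

theorem stmt_19 {α : Type*} [MeasurableSpace α]
    (P Q : Measure α) [IsProbabilityMeasure P] [IsProbabilityMeasure Q]
    (hac : P ≪ Q)
    (hint : Integrable (fun x => Real.log ((P.rnDeriv Q x).toReal)) P)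
    (A : Set α) (hA : MeasurableSet A) :
    (1 / 2) * Real.exp (-(klDiv P Q)) ≤ (P Aᶜ).toReal + (Q A).toReal ∧
    (∀ ρ ε m : ℝ, ∀ n : ℕ, 0 < ρ → ρ < 1 → 0 < ε → ε < m →
      klDiv P Q ≤ 2 * ρ * ε ^ 2 * n / (m - ε) ^ 2 →
      (1 / 4) * Real.exp (-(2 * ρ * ε ^ 2 * n / (m - ε) ^ 2)) ≤
        (1 / 2) * ((P Aᶜ).toReal + (Q A).toReal)) := by
  have h1 := bh_main P Q hac hint A hA
  refine ⟨h1, fun ρ ε m n _ _ _ _ hKL => ?_⟩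
  have h2 : Real.exp (-(2 * ρ * ε ^ 2 * n / (m - ε) ^ 2)) ≤ Real.exp (-(klDiv P Q)) :=
    Real.exp_le_exp.mpr (by linarith)
  linarith
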